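/- The arc length of a Bezier curve is at most the total length of its control polygon: ∫_0^1 ‖b'(s)‖ ds ≤ Σ_{i=0}^{k-1} ‖γ_{i+1} − γ_i‖, where ‖·‖ is the Euclidean norm on ℝ^n. -/

import Mathlib

open intervalIntegral

lemma beta_nat_integral : ∀ (m i : ℕ),
    ∫ s in (0:ℝ)..1, s ^ i * (1 - s) ^ m = (Nat.factorial i * Nat.factorial m : ℝ) / Nat.factorial (i+m+1) := by
  intro m
  induction m with
  | zero =>
    intro i
    simp [integral_pow, Nat.factorial_succ, Nat.factorial]
    rw [eq_div_iff (by positivity)]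
    push_cast
    field_simp
  | succ m ih =>
    intro i
    have hderiv : ∀ s : ℝ, HasDerivAt (fun s : ℝ => s ^ (i + 1) * (1 - s) ^ (m + 1))
        ((i + 1 : ℝ) * s ^ i * (1 - s) ^ (m + 1) - (m + 1 : ℝ) * (s ^ (i + 1) * (1 - s) ^ m)) s := by
      intro s
      have h1 : HasDerivAt (fun s : ℝ => s ^ (i + 1)) ((i + 1 : ℝ) * s ^ i) s := by
        simpa using (hasDerivAt_pow (i + 1) s)
      have h2 : HasDerivAt (fun s : ℝ => (1 - s) ^ (m + 1)) (-((m + 1 : ℝ) * (1 - s) ^ m)) s := by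
        have := ((hasDerivAt_pow (m + 1) (1 - s)).comp s
          ((hasDerivAt_const s (1:ℝ)).sub (hasDerivAt_id s)))
        simpa [Function.comp_def] using this
      have : HasDerivAt (fun s : ℝ => s ^ (i + 1) * (1 - s) ^ (m + 1))
          ((i + 1 : ℝ) * s ^ i * (1 - s) ^ (m + 1) + s ^ (i + 1) * -((m + 1 : ℝ) * (1 - s) ^ m)) s :=
        h1.fun_mul h2
      convert this using 1
      push_cast
      ring
    have hint : (∫ s in (0:ℝ)..1, ((i + 1 : ℝ) * s ^ i * (1 - s) ^ (m + 1)
        - (m + 1 : ℝ) * (s ^ (i + 1) * (1 - s) ^ m))) = 0 := by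
      rw [integral_eq_sub_of_hasDerivAt (fun s _ => hderiv s)]
      · simp
      · apply Continuous.intervalIntegrable; fun_prop
    rw [integral_sub (by apply Continuous.intervalIntegrable; fun_prop)
        (by apply Continuous.intervalIntegrable; fun_prop), sub_eq_zero] at hint
    have e1 : (∫ s in (0:ℝ)..1, (i + 1 : ℝ) * s ^ i * (1 - s) ^ (m + 1))
        = (i + 1 : ℝ) * ∫ s in (0:ℝ)..1, s ^ i * (1 - s) ^ (m + 1) := by
      rw [← integral_const_mul]; congr 1; ext s; ring
    have e2 : (∫ s in (0:ℝ)..1, (m + 1 : ℝ) * (s ^ (i + 1) * (1 - s) ^ m))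
        = (m + 1 : ℝ) * ∫ s in (0:ℝ)..1, s ^ (i + 1) * (1 - s) ^ m := integral_const_mul _ _
    rw [e1, e2, ih (i + 1)] at hint
    have hip : ((i : ℝ) + 1) ≠ 0 := by positivity
    field_simp at hint ⊢
    have hidx : i + (m + 1) + 1 = i + 1 + m + 1 := by ring
    rw [hidx]
    apply mul_left_cancel₀ hip
    rw [show ((i:ℝ)+1) * ((∫ s in (0:ℝ)..1, s ^ i * (1-s) ^ (m+1)) * (Nat.factorial (i+1+m+1) : ℝ))
        = (((i:ℝ)+1) * ∫ s in (0:ℝ)..1, s ^ i * (1-s) ^ (m+1)) * (Nat.factorial (i+1+m+1) : ℝ)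
        from by ring, hint]
    push_cast [Nat.factorial_succ]
    ring

/-- The arc length of a Bezier curve is at most the length of its control polygon. -/
theorem bezier_arclength_le_control_polygon (n k : ℕ)
    (γ : ℕ → EuclideanSpace ℝ (Fin n)) :
    (∫ s in (0 : ℝ)..1,
        ‖∑ i ∈ Finset.range k,
            (((k - 1).choose i : ℝ) * (1 - s) ^ (k - 1 - i) * s ^ i) •
              ((k : ℝ) • (γ (i + 1) - γ i))‖) ≤
      ∑ i ∈ Finset.range k, ‖γ (i + 1) - γ i‖ := by
  rcases Nat.eq_zero_or_pos k with hk | hk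
  · subst hk; simp
  have hcont : ∀ i : ℕ, Continuous
      (fun s : ℝ => (((k - 1).choose i : ℝ) * (1 - s) ^ (k - 1 - i) * s ^ i)) := by
    intro i; fun_prop
  calc (∫ s in (0 : ℝ)..1,
        ‖∑ i ∈ Finset.range k,
            (((k - 1).choose i : ℝ) * (1 - s) ^ (k - 1 - i) * s ^ i) •
              ((k : ℝ) • (γ (i + 1) - γ i))‖)
      ≤ ∫ s in (0 : ℝ)..1, ∑ i ∈ Finset.range k,
          (((k - 1).choose i : ℝ) * (1 - s) ^ (k - 1 - i) * s ^ i) *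
            ((k : ℝ) * ‖γ (i + 1) - γ i‖) := by
        apply intervalIntegral.integral_mono_on (by norm_num)
        · apply Continuous.intervalIntegrable
          exact (continuous_finset_sum _ fun i _ => ((hcont i).smul continuous_const)).norm
        · apply Continuous.intervalIntegrable
          exact continuous_finset_sum _ fun i _ => (hcont i).mul continuous_const
        · intro s hs
          refine (norm_sum_le _ _).trans ?_
          apply Finset.sum_le_sum
          intro i _
          rw [norm_smul, norm_smul, Real.norm_eq_abs, Real.norm_eq_abs]
          have h0 : (0:ℝ) ≤ 1 - s := by linarith [hs.2]
          have h1 : (0:ℝ) ≤ (((k - 1).choose i : ℝ) * (1 - s) ^ (k - 1 - i) * s ^ i) :=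
            mul_nonneg (mul_nonneg (Nat.cast_nonneg _) (pow_nonneg h0 _)) (pow_nonneg hs.1 _)
          rw [abs_of_nonneg h1, abs_of_nonneg (Nat.cast_nonneg k), mul_assoc]
    _ = ∑ i ∈ Finset.range k, ∫ s in (0 : ℝ)..1,
          (((k - 1).choose i : ℝ) * (1 - s) ^ (k - 1 - i) * s ^ i) *
            ((k : ℝ) * ‖γ (i + 1) - γ i‖) := by
        apply intervalIntegral.integral_finset_sum
        intro i _
        exact ((hcont i).mul continuous_const).intervalIntegrable _ _
    _ = ∑ i ∈ Finset.range k, ‖γ (i + 1) - γ i‖ := by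
        refine Finset.sum_congr rfl fun i hi => ?_
        have hik : i + (k - 1 - i) + 1 = k := by
          have := Finset.mem_range.mp hi; omega
        have him : i ≤ k - 1 := by have := Finset.mem_range.mp hi; omega
        have hrw : (fun s : ℝ => (((k - 1).choose i : ℝ) * (1 - s) ^ (k - 1 - i) * s ^ i) *
            ((k : ℝ) * ‖γ (i + 1) - γ i‖))
            = fun s : ℝ => (((k - 1).choose i : ℝ) * ((k : ℝ) * ‖γ (i + 1) - γ i‖)) *
              (s ^ i * (1 - s) ^ (k - 1 - i)) := by
          funext s; ring
        rw [hrw, intervalIntegral.integral_const_mul, beta_nat_integral, hik]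
        have h1 : ((k - 1).choose i * Nat.factorial i * Nat.factorial (k - 1 - i) : ℝ)
            = (Nat.factorial (k - 1) : ℝ) := by
          exact_mod_cast congrArg (Nat.cast (R := ℝ))
            (Nat.choose_mul_factorial_mul_factorial him)
        have h2 : ((k : ℝ)) * (Nat.factorial (k - 1) : ℝ) = (Nat.factorial k : ℝ) := by
          exact_mod_cast congrArg (Nat.cast (R := ℝ)) (Nat.mul_factorial_pred hk.ne')
        have hkf : (Nat.factorial k : ℝ) ≠ 0 := by positivity
        field_simp
        push_cast at h1 ⊢
        linear_combination ((k : ℝ) * ‖γ (i + 1) - γ i‖) * h1 + ‖γ (i + 1) - γ i‖ * h2
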